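/- Define h : {(x,y) : 0 ≤ x ≤ y ≤ 1} → ℝ by h(x,y) = (1/2)·max(x+y−2/3, 0) + (2/3)·max(1−x−y, 0) + x + (2/3)·y. Then for all 0 ≤ θ₁ ≤ θ₂ ≤ θ₃ ≤ 1, writing s = max(θ₁+θ₂+θ₃, 1), we have 2s ≤ h(θ₁,θ₂) + h(θ₁,θ₃) + h(θ₂,θ₃) ≤ (7/3)·s. -/
import Mathlib

noncomputable def hB (x y : ℝ) : ℝ :=
  1 / 2 * max (x + y - 2 / 3) 0 + 2 / 3 * max (1 - x - y) 0 + x + 2 / 3 * y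

set_option maxHeartbeats 2000000 in
theorem stmt_7 : ∀ θ₁ θ₂ θ₃ : ℝ, 0 ≤ θ₁ → θ₁ ≤ θ₂ → θ₂ ≤ θ₃ → θ₃ ≤ 1 →
    2 * max (θ₁ + θ₂ + θ₃) 1 ≤ hB θ₁ θ₂ + hB θ₁ θ₃ + hB θ₂ θ₃ ∧
    hB θ₁ θ₂ + hB θ₁ θ₃ + hB θ₂ θ₃ ≤ 7 / 3 * max (θ₁ + θ₂ + θ₃) 1 := by
  intro a b c h0 h1 h2 h3
  simp only [hB, max_def]
  split_ifs <;> constructor <;> linarith
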